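/- arXiv:2407.12365 — 5 statements merged into one kernel-verified Lean document; each statement's English description precedes it below -/
import Mathlib

section
/- Let a > 0 and x, s ≥ 0. Then e^{-(x-s)²/(4a)} - e^{-(x+s)²/(4a)} ≤ 2s/√(2e·a). -/
lemma key (t : ℝ) : |t| * Real.exp (-t ^ 2) ≤ (Real.sqrt (2 * Real.exp 1))⁻¹ := by
  have h2e : (0:ℝ) < 2 * Real.exp 1 := by positivity
  have hsq : (|t| * Real.exp (-t ^ 2)) ^ 2 ≤ ((Real.sqrt (2 * Real.exp 1))⁻¹) ^ 2 := by
    rw [inv_pow, Real.sq_sqrt h2e.le]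
    have h1 : 2 * t ^ 2 ≤ Real.exp (2 * t ^ 2 - 1) := by
      have := Real.add_one_le_exp (2 * t ^ 2 - 1)
      linarith
    have h2 : Real.exp (2 * t ^ 2 - 1) = Real.exp (2 * t ^ 2) / Real.exp 1 := by
      rw [Real.exp_sub]
    have h3 : t ^ 2 * Real.exp (-t ^ 2) ^ 2 = t ^ 2 / Real.exp (2 * t ^ 2) := by
      rw [← Real.exp_nat_mul]
      rw [div_eq_mul_inv, ← Real.exp_neg]
      ring_nf
    rw [mul_pow, sq_abs, h3]
    rw [div_le_iff₀ (Real.exp_pos _)]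
    have h4 : (2 * Real.exp 1)⁻¹ * Real.exp (2 * t ^ 2) = Real.exp (2 * t ^ 2 - 1) / 2 := by
      rw [h2]; field_simp
    rw [h4]; linarith
  have hnn : 0 ≤ |t| * Real.exp (-t ^ 2) := by positivity
  have hnn2 : 0 ≤ (Real.sqrt (2 * Real.exp 1))⁻¹ := by positivity
  exact (pow_le_pow_iff_left₀ hnn hnn2 two_ne_zero).mp hsq

theorem stmt_1 (a x s : ℝ) (ha : 0 < a) (hx : 0 ≤ x) (hs : 0 ≤ s) :
    Real.exp (-(x - s) ^ 2 / (4 * a)) - Real.exp (-(x + s) ^ 2 / (4 * a)) ≤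
      2 * s / Real.sqrt (2 * Real.exp 1 * a) := by
  set C : ℝ := (Real.sqrt (2 * Real.exp 1 * a))⁻¹ with hC
  set f : ℝ → ℝ := fun ξ => Real.exp (-(x - ξ) ^ 2 / (4 * a)) with hf
  set f' : ℝ → ℝ := fun ξ => Real.exp (-(x - ξ) ^ 2 / (4 * a)) * ((x - ξ) / (2 * a)) with hf'
  have hderiv : ∀ ξ : ℝ, HasDerivAt f (f' ξ) ξ := by
    intro ξ
    have h1 : HasDerivAt (fun ξ : ℝ => -(x - ξ) ^ 2 / (4 * a)) ((x - ξ) / (2 * a)) ξ := by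
      have h0 : HasDerivAt (fun ξ : ℝ => x - ξ) (-1) ξ := (hasDerivAt_id ξ).const_sub x
      have h2 := (h0.pow 2).neg.div_const (4 * a)
      refine h2.congr_deriv ?_
      field_simp
      ring
    exact h1.exp
  have hbound : ∀ ξ : ℝ, ‖f' ξ‖ ≤ C := by
    intro ξ
    have hsa : (0:ℝ) < Real.sqrt a := Real.sqrt_pos.mpr ha
    set t : ℝ := (x - ξ) / (2 * Real.sqrt a) with ht
    have ht2 : t ^ 2 = (x - ξ) ^ 2 / (4 * a) := by
      rw [ht, div_pow, mul_pow, Real.sq_sqrt ha.le]; norm_num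
    have htv : (x - ξ) / (2 * a) = t / Real.sqrt a := by
      rw [ht]
      rw [div_div]
      congr 1
      rw [mul_assoc, Real.mul_self_sqrt ha.le]
    have : ‖f' ξ‖ = |t| * Real.exp (-t ^ 2) / Real.sqrt a := by
      rw [hf']
      simp only [Real.norm_eq_abs, abs_mul, Real.abs_exp, htv, neg_div, ht2, abs_div,
        abs_of_nonneg hsa.le]
      ring
    rw [this, hC]
    rw [Real.sqrt_mul (by positivity) a, mul_inv, div_eq_mul_inv]
    gcongr
    exact key t
  have := Convex.norm_image_sub_le_of_norm_hasDerivWithin_le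
    (f := f) (f' := f') (s := Set.univ) (C := C)
    (fun ξ _ => (hderiv ξ).hasDerivWithinAt) (fun ξ _ => hbound ξ)
    convex_univ (Set.mem_univ (-s)) (Set.mem_univ s)
  have hfs : f s = Real.exp (-(x - s) ^ 2 / (4 * a)) := rfl
  have hfns : f (-s) = Real.exp (-(x + s) ^ 2 / (4 * a)) := by
    simp only [hf, sub_neg_eq_add]
  rw [Real.norm_eq_abs, Real.norm_eq_abs] at this
  have h2s : |s - -s| = 2 * s := by rw [abs_of_nonneg (by linarith)]; ring
  rw [h2s] at this
  have h3 : f s - f (-s) ≤ |f s - f (-s)| := le_abs_self _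
  have h4 := h3.trans this
  rw [hfs, hfns] at h4
  calc Real.exp (-(x - s) ^ 2 / (4 * a)) - Real.exp (-(x + s) ^ 2 / (4 * a))
      ≤ C * (2 * s) := h4
    _ = 2 * s / Real.sqrt (2 * Real.exp 1 * a) := by rw [hC]; ring
end

section
/- For every x ≥ 0 and y > 0, the quantity |(e^{-(x-y)²/4} - e^{-(x+y)²/4})/y - x·e^{-x²/4}| is bounded by C·y for a universal constant C > 0. -/
set_option maxHeartbeats 1000000

open Real

lemma aux_exp (u : ℝ) (hu : 0 ≤ u) :
    Real.exp u - Real.exp (-u) - 2 * u ≤ u ^ 3 * Real.exp u := by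
  rcases le_or_gt u 1 with h1 | h1
  · have hb1 := Real.exp_bound (x := u) (by rw [abs_of_nonneg hu]; exact h1) (n := 3) (by norm_num)
    have hb2 := Real.exp_bound (x := -u) (by rw [abs_neg, abs_of_nonneg hu]; exact h1) (n := 3)
      (by norm_num)
    simp [Finset.sum_range_succ, abs_of_nonneg hu, Nat.factorial] at hb1 hb2
    have h1' := abs_le.1 hb1
    have h2' := abs_le.1 hb2
    have he : (1:ℝ) ≤ Real.exp u := Real.one_le_exp hu
    nlinarith [mul_nonneg (pow_nonneg hu 3) (sub_nonneg.2 he)]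
  · have he : 0 < Real.exp (-u) := Real.exp_pos _
    have hu3 : (1:ℝ) ≤ u ^ 3 := (one_lt_pow₀ h1 (by norm_num)).le
    nlinarith [Real.exp_pos u]

lemma aux_xexp (x : ℝ) (hx : 0 ≤ x) : x * Real.exp (-x ^ 2 / 4) ≤ 1 := by
  rw [show -x^2/4 = -(x^2/4) by ring, Real.exp_neg]
  rw [mul_inv_le_iff₀ (Real.exp_pos _), one_mul]
  calc x ≤ 1 + x ^ 2 / 4 := by nlinarith [sq_nonneg (x - 2)]
    _ ≤ Real.exp (x ^ 2 / 4) := by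
        have := Real.add_one_le_exp (x ^ 2 / 4); linarith

lemma aux_cube (x y : ℝ) (hx : 0 ≤ x) (hy : 0 < y) (hy1 : y ≤ 1) :
    x ^ 3 * Real.exp (-(x - y) ^ 2 / 4) ≤ 13824 := by
  have hle : Real.exp (-(x - y) ^ 2 / 4) ≤ 1 := by
    apply Real.exp_le_one_iff.2; nlinarith [sq_nonneg (x - y)]
  have hep : (0:ℝ) < Real.exp (-(x - y) ^ 2 / 4) := Real.exp_pos _
  rcases le_or_gt x 2 with h2 | h2
  · have h8 : x ^ 3 ≤ 8 := by nlinarith [mul_nonneg (by linarith : (0:ℝ) ≤ 2 - x) (by nlinarith : (0:ℝ) ≤ 4 + 2*x + x^2)]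
    calc x ^ 3 * Real.exp (-(x - y) ^ 2 / 4) ≤ 8 * 1 := by
          apply mul_le_mul h8 hle hep.le (by norm_num)
      _ ≤ 13824 := by norm_num
  · have ht : x / 2 ≤ x - y := by linarith
    have hmono : Real.exp (-(x - y) ^ 2 / 4) ≤ Real.exp (-(x ^ 2 / 16)) :=
      Real.exp_le_exp.2 (by nlinarith)
    have hcube : x ^ 2 / 48 ≤ Real.exp (x ^ 2 / 48) := by
      have := Real.add_one_le_exp (x ^ 2 / 48); linarith
    have hpow : x ^ 6 / 110592 ≤ Real.exp (x ^ 2 / 16) := by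
      have h3 : Real.exp (x ^ 2 / 16) = (Real.exp (x ^ 2 / 48)) ^ 3 := by
        rw [← Real.exp_nat_mul]; ring_nf
      have h0 : (0:ℝ) ≤ x ^ 2 / 48 := by positivity
      have := pow_le_pow_left₀ h0 hcube 3
      rw [h3]
      calc x ^ 6 / 110592 = (x ^ 2 / 48) ^ 3 := by ring
        _ ≤ _ := this
    have hx6 : (0:ℝ) < x ^ 6 / 110592 := by positivity
    have hexp : Real.exp (-(x ^ 2 / 16)) ≤ 110592 / x ^ 6 := by
      rw [Real.exp_neg]
      rw [inv_le_iff_one_le_mul₀ (Real.exp_pos _)]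
      calc (1:ℝ) = (110592 / x ^ 6) * (x ^ 6 / 110592) := by
            field_simp
        _ ≤ (110592 / x ^ 6) * Real.exp (x ^ 2 / 16) := by
            apply mul_le_mul_of_nonneg_left hpow (by positivity)
    have hfin : x ^ 3 * Real.exp (-(x - y) ^ 2 / 4) ≤ x ^ 3 * (110592 / x ^ 6) := by
      apply mul_le_mul_of_nonneg_left (le_trans hmono hexp) (by positivity)
    have : x ^ 3 * (110592 / x ^ 6) = 110592 / x ^ 3 := by
      field_simp
    rw [this] at hfin
    have : (110592:ℝ) / x ^ 3 ≤ 13824 := by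
      rw [div_le_iff₀ (by positivity)]; nlinarith
    linarith

theorem stmt_2 :
    ∃ C > (0 : ℝ), ∀ x y : ℝ, 0 ≤ x → 0 < y →
      |(Real.exp (-(x - y) ^ 2 / 4) - Real.exp (-(x + y) ^ 2 / 4)) / y -
          x * Real.exp (-x ^ 2 / 4)| ≤ C * y := by
  refine ⟨2000, by norm_num, ?_⟩
  intro x y hx hy
  set u : ℝ := x * y / 2 with hudef
  have hu0 : 0 ≤ u := by positivity
  set A : ℝ := Real.exp (-x ^ 2 / 4) with hA
  set B : ℝ := Real.exp (-y ^ 2 / 4) with hB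
  have hA0 : 0 < A := Real.exp_pos _
  have hB0 : 0 < B := Real.exp_pos _
  have hA1 : A ≤ 1 := Real.exp_le_one_iff.2 (by nlinarith [sq_nonneg x])
  have hB1 : B ≤ 1 := Real.exp_le_one_iff.2 (by nlinarith [sq_nonneg y])
  have e1 : Real.exp (-(x - y) ^ 2 / 4) = A * B * Real.exp u := by
    rw [hA, hB, ← Real.exp_add, ← Real.exp_add]; congr 1; rw [hudef]; ring
  have e2 : Real.exp (-(x + y) ^ 2 / 4) = A * B * Real.exp (-u) := by
    rw [hA, hB, ← Real.exp_add, ← Real.exp_add]; congr 1; rw [hudef]; ring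
  have hxA : x * A ≤ 1 := aux_xexp x hx
  rcases le_or_gt 1 y with h1y | h1y
  · -- large y
    have hd : |Real.exp (-(x - y) ^ 2 / 4) - Real.exp (-(x + y) ^ 2 / 4)| ≤ 1 := by
      have p1 : Real.exp (-(x - y) ^ 2 / 4) ≤ 1 :=
        Real.exp_le_one_iff.2 (by nlinarith [sq_nonneg (x - y)])
      have p2 : Real.exp (-(x + y) ^ 2 / 4) ≤ 1 :=
        Real.exp_le_one_iff.2 (by nlinarith [sq_nonneg (x + y)])
      have q1 : 0 < Real.exp (-(x - y) ^ 2 / 4) := Real.exp_pos _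
      have q2 : 0 < Real.exp (-(x + y) ^ 2 / 4) := Real.exp_pos _
      rw [abs_le]; constructor <;> linarith
    calc |(Real.exp (-(x - y) ^ 2 / 4) - Real.exp (-(x + y) ^ 2 / 4)) / y - x * A|
        ≤ |(Real.exp (-(x - y) ^ 2 / 4) - Real.exp (-(x + y) ^ 2 / 4)) / y| + |x * A| :=
          abs_sub _ _
      _ ≤ 1 + 1 := by
          gcongr ?_ + ?_
          · rw [abs_div, abs_of_pos hy, div_le_one hy]
            exact le_trans hd h1y
          · rw [abs_of_nonneg (by positivity)]; exact hxA
      _ ≤ 2000 * y := by linarith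
  · -- small y
    have hE0 : 0 ≤ Real.exp u - Real.exp (-u) - 2 * u := by
      have hs : u ≤ Real.sinh u := Real.self_le_sinh_iff.2 hu0
      rw [Real.sinh_eq] at hs
      linarith
    have hE1 : Real.exp u - Real.exp (-u) - 2 * u ≤ u ^ 3 * Real.exp u := aux_exp u hu0
    have hBlb : 1 - y ^ 2 / 4 ≤ B := by
      have := Real.add_one_le_exp (-(y ^ 2 / 4))
      rw [hB]; calc 1 - y ^ 2 / 4 = -(y ^ 2 / 4) + 1 := by ring
        _ ≤ Real.exp (-(y ^ 2 / 4)) := this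
        _ = Real.exp (-y ^ 2 / 4) := by ring_nf
    have hiden : (Real.exp (-(x - y) ^ 2 / 4) - Real.exp (-(x + y) ^ 2 / 4)) / y - x * A
        = (A / y) * (B * (Real.exp u - Real.exp (-u) - 2 * u) + x * y * (B - 1)) := by
      rw [e1, e2, hudef]; field_simp; ring
    rw [hiden, abs_mul, abs_of_pos (div_pos hA0 hy)]
    have habs : |B * (Real.exp u - Real.exp (-u) - 2 * u) + x * y * (B - 1)|
        ≤ B * (u ^ 3 * Real.exp u) + x * y * (y ^ 2 / 4) := by
      calc |B * (Real.exp u - Real.exp (-u) - 2 * u) + x * y * (B - 1)|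
          ≤ |B * (Real.exp u - Real.exp (-u) - 2 * u)| + |x * y * (B - 1)| := abs_add_le _ _
        _ ≤ B * (u ^ 3 * Real.exp u) + x * y * (y ^ 2 / 4) := by
            have r1 : |B * (Real.exp u - Real.exp (-u) - 2 * u)|
                = B * (Real.exp u - Real.exp (-u) - 2 * u) :=
              abs_of_nonneg (mul_nonneg hB0.le hE0)
            have r2 : |x * y * (B - 1)| = x * y * (1 - B) := by
              rw [abs_mul, abs_of_nonneg (by positivity : (0:ℝ) ≤ x * y)]
              congr 1
              rw [abs_of_nonpos (by linarith)]; ring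
            rw [r1, r2]
            have s1 : B * (Real.exp u - Real.exp (-u) - 2 * u) ≤ B * (u ^ 3 * Real.exp u) :=
              mul_le_mul_of_nonneg_left hE1 hB0.le
            have s2 : x * y * (1 - B) ≤ x * y * (y ^ 2 / 4) :=
              mul_le_mul_of_nonneg_left (by linarith) (by positivity)
            linarith
    have hmain : (A / y) * (B * (u ^ 3 * Real.exp u) + x * y * (y ^ 2 / 4)) ≤ 2000 * y := by
      have key1 : (A / y) * (B * (u ^ 3 * Real.exp u))
          = (x ^ 3 * (A * B * Real.exp u)) * y ^ 2 / 8 := by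
        rw [hudef]; field_simp; ring
      have key2 : x ^ 3 * (A * B * Real.exp u) ≤ 13824 := by
        rw [← e1]; exact aux_cube x y hx hy h1y.le
      have key3 : (A / y) * (x * y * (y ^ 2 / 4)) = (x * A) * (y ^ 2 / 4) := by
        field_simp
      have pos1 : (0:ℝ) ≤ y ^ 2 := sq_nonneg y
      have b1 : (x ^ 3 * (A * B * Real.exp u)) * y ^ 2 / 8 ≤ 13824 * y ^ 2 / 8 := by
        have := mul_le_mul_of_nonneg_right key2 pos1
        linarith
      have b2 : (x * A) * (y ^ 2 / 4) ≤ 1 * (y ^ 2 / 4) := by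
        apply mul_le_mul_of_nonneg_right hxA (by positivity)
      have hy2 : y ^ 2 ≤ y := by nlinarith
      rw [mul_add, key1, key3]
      nlinarith
    calc A / y * |B * (Real.exp u - Real.exp (-u) - 2 * u) + x * y * (B - 1)|
        ≤ (A / y) * (B * (u ^ 3 * Real.exp u) + x * y * (y ^ 2 / 4)) :=
          mul_le_mul_of_nonneg_left habs (div_nonneg hA0.le hy.le)
      _ ≤ 2000 * y := hmain
end

section
/- Let u: [0,∞) → ℝ be integrable with ∫₀^∞ x·u(x) dx = M₁ < ∞ and u ≥ 0, and let a > 0. Then (1/(2√(π a)))·∫₀^∞ (e^{-(x-s)²/(4a)} - e^{-(x+s)²/(4a)})·u(s) ds ≤ M₁/(√(2eπ)·a) for every x ≥ 0. -/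
open MeasureTheory Real

lemma aux_abs_exp (a : ℝ) (ha : 0 < a) (c : ℝ) :
    |c| * Real.exp (-c ^ 2 / (4 * a)) ≤ Real.sqrt (2 * a) * Real.exp (-(1:ℝ)/2) := by
  have hb : Real.sqrt (2 * a) ^ 2 = 2 * a := Real.sq_sqrt (by linarith)
  have hbpos : 0 < Real.sqrt (2 * a) := Real.sqrt_pos.2 (by linarith)
  have h1 := Real.add_one_le_exp (c ^ 2 / (4 * a) - 1 / 2)
  have key : |c| ≤ Real.sqrt (2 * a) * Real.exp (c ^ 2 / (4 * a) - 1 / 2) := by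
    have h2 : Real.sqrt (2 * a) * (c ^ 2 / (4 * a) - 1 / 2 + 1) = Real.sqrt (2*a)/2 + c^2 * Real.sqrt (2*a) / (4*a) := by
      field_simp; ring
    have h3 : Real.sqrt (2*a)/2 + c^2 * Real.sqrt (2*a) / (4*a) ≥ |c| := by
      rw [ge_iff_le, show c ^ 2 * Real.sqrt (2*a) / (4*a) = c^2 / (2 * Real.sqrt (2*a)) by
        rw [div_eq_div_iff (by positivity) (by positivity)]; nlinarith]
      rw [div_add_div _ _ (by norm_num) (by positivity), le_div_iff₀ (by positivity)]
      nlinarith [sq_nonneg (Real.sqrt (2*a) - |c|), sq_abs c]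
    calc |c| ≤ Real.sqrt (2 * a) * (c ^ 2 / (4 * a) - 1 / 2 + 1) := by rw [h2]; linarith
      _ ≤ Real.sqrt (2 * a) * Real.exp (c ^ 2 / (4 * a) - 1 / 2) := by
          apply mul_le_mul_of_nonneg_left (by linarith) hbpos.le
  calc |c| * Real.exp (-c ^ 2 / (4 * a))
      ≤ Real.sqrt (2 * a) * Real.exp (c ^ 2 / (4 * a) - 1 / 2) * Real.exp (-c ^ 2 / (4 * a)) :=
        mul_le_mul_of_nonneg_right key (Real.exp_pos _).le
    _ = Real.sqrt (2 * a) * Real.exp (-(1:ℝ)/2) := by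
        rw [mul_assoc, ← Real.exp_add]; ring_nf

lemma aux_kernel (a : ℝ) (ha : 0 < a) (x s : ℝ) (hx : 0 ≤ x) (hs : 0 ≤ s) :
    Real.exp (-(x - s) ^ 2 / (4 * a)) - Real.exp (-(x + s) ^ 2 / (4 * a)) ≤
      2 * s * (Real.exp (-(1:ℝ)/2) / Real.sqrt (2 * a)) := by
  rcases eq_or_lt_of_le hs with rfl | hs'
  · simp
  · set f : ℝ → ℝ := fun t => Real.exp (-t ^ 2 / (4 * a)) with hf
    set f' : ℝ → ℝ := fun t => Real.exp (-t ^ 2 / (4 * a)) * (-t / (2 * a)) with hf'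
    have hderiv : ∀ t : ℝ, HasDerivAt f (f' t) t := by
      intro t
      have h1 : HasDerivAt (fun t : ℝ => -t ^ 2 / (4 * a)) (-t / (2 * a)) t := by
        have := ((hasDerivAt_pow 2 t).neg).div_const (4 * a)
        refine this.congr_deriv ?_
        push_cast; field_simp; ring
      exact h1.exp
    have hlt : x - s < x + s := by linarith
    obtain ⟨c, _, hc⟩ := exists_hasDerivAt_eq_slope f f' hlt
      (Continuous.continuousOn (by fun_prop)) (fun t _ => hderiv t)
    have hbpos : 0 < Real.sqrt (2 * a) := Real.sqrt_pos.2 (by linarith)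
    have hslope : f (x + s) - f (x - s) = f' c * (2 * s) := by
      have h2s : (x + s) - (x - s) = 2 * s := by ring
      field_simp at hc
      rw [hc, h2s]; field_simp
    have habs : |f' c| ≤ Real.exp (-(1:ℝ)/2) / Real.sqrt (2 * a) := by
      have h1 : |f' c| = |c| * Real.exp (-c ^ 2 / (4 * a)) / (2 * a) := by
        rw [hf']
        rw [abs_mul, abs_div, abs_of_pos (Real.exp_pos _), abs_neg, abs_of_pos (by linarith : (0:ℝ) < 2*a)]
        ring
      rw [h1, div_le_div_iff₀ (by linarith) hbpos]
      have := aux_abs_exp a ha c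
      nlinarith [Real.sq_sqrt (show (0:ℝ) ≤ 2*a by linarith), Real.exp_pos (-(1:ℝ)/2)]
    have : f (x - s) - f (x + s) = -(f' c) * (2 * s) := by rw [show -(f' c) * (2*s) = -(f' c * (2*s)) by ring, ← hslope]; ring
    rw [show Real.exp (-(x - s) ^ 2 / (4 * a)) - Real.exp (-(x + s) ^ 2 / (4 * a)) = f (x-s) - f (x+s) from rfl, this]
    have hle : -(f' c) ≤ Real.exp (-(1:ℝ)/2) / Real.sqrt (2 * a) := le_trans (neg_le_abs _) habs
    nlinarith [hs'.le]

theorem stmt_13 (u : ℝ → ℝ) (hpos : ∀ s, 0 ≤ u s)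
    (hint : MeasureTheory.IntegrableOn u (Set.Ioi 0))
    (M₁ : ℝ) (hM₁ : M₁ = ∫ x in Set.Ioi (0 : ℝ), x * u x)
    (hmom : MeasureTheory.IntegrableOn (fun x => x * u x) (Set.Ioi 0))
    (a : ℝ) (ha : 0 < a) (x : ℝ) (hx : 0 ≤ x) :
    1 / (2 * Real.sqrt (Real.pi * a)) *
        ∫ s in Set.Ioi (0 : ℝ),
          (Real.exp (-(x - s) ^ 2 / (4 * a)) - Real.exp (-(x + s) ^ 2 / (4 * a))) * u s ≤
      M₁ / (Real.sqrt (2 * Real.exp 1 * Real.pi) * a) := by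
  set C := Real.exp (-(1:ℝ)/2) / Real.sqrt (2 * a) with hC
  have hCpos : 0 < C := by positivity
  have hbnd : ∫ s in Set.Ioi (0:ℝ),
      (Real.exp (-(x - s) ^ 2 / (4 * a)) - Real.exp (-(x + s) ^ 2 / (4 * a))) * u s ≤
      ∫ s in Set.Ioi (0:ℝ), 2 * C * (s * u s) := by
    apply integral_mono_of_nonneg
    · filter_upwards [ae_restrict_mem measurableSet_Ioi] with s hs
      have hs' : (0:ℝ) < s := hs
      have : Real.exp (-(x + s) ^ 2 / (4 * a)) ≤ Real.exp (-(x - s) ^ 2 / (4 * a)) := by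
        apply Real.exp_le_exp.2
        rw [div_le_div_iff₀ (by linarith) (by linarith)]
        nlinarith [mul_nonneg (mul_nonneg hx hs'.le) ha.le]
      exact mul_nonneg (by linarith) (hpos s)
    · exact (hmom.const_mul (2 * C))
    · filter_upwards [ae_restrict_mem measurableSet_Ioi] with s hs
      have hs' : (0:ℝ) < s := hs
      have hk := aux_kernel a ha x s hx hs'.le
      have hu := hpos s
      calc (Real.exp (-(x - s) ^ 2 / (4 * a)) - Real.exp (-(x + s) ^ 2 / (4 * a))) * u s
          ≤ (2 * s * C) * u s := mul_le_mul_of_nonneg_right hk hu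
        _ = 2 * C * (s * u s) := by ring
  have hint2 : ∫ s in Set.Ioi (0:ℝ), 2 * C * (s * u s) = 2 * C * M₁ := by
    rw [hM₁, MeasureTheory.integral_const_mul]
  have hM₁nonneg : 0 ≤ M₁ := by
    rw [hM₁]
    apply integral_nonneg_of_ae
    filter_upwards [ae_restrict_mem measurableSet_Ioi] with s hs
    have : (0:ℝ) < s := hs
    exact mul_nonneg this.le (hpos s)
  have hfac : 0 < 1 / (2 * Real.sqrt (Real.pi * a)) := by positivity
  have step1 := mul_le_mul_of_nonneg_left hbnd hfac.le
  rw [hint2] at step1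
  refine step1.trans (le_of_eq ?_)
  -- 1/(2√(πa)) * (2 C M₁) = M₁/(√(2eπ) a)
  have hpa : Real.sqrt (Real.pi * a) > 0 := Real.sqrt_pos.2 (by positivity)
  have h2a : Real.sqrt (2 * a) > 0 := Real.sqrt_pos.2 (by linarith)
  have hE : Real.sqrt (Real.exp 1) = Real.exp ((1:ℝ)/2) := by
    have h : Real.exp ((1:ℝ)/2) * Real.exp ((1:ℝ)/2) = Real.exp 1 := by
      rw [← Real.exp_add]; norm_num
    rw [← h, Real.sqrt_mul_self (Real.exp_pos _).le]
  have hsq : Real.sqrt (2 * Real.exp 1 * Real.pi) * a =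
      Real.sqrt (Real.pi * a) * Real.sqrt (2 * a) * Real.sqrt (Real.exp 1) := by
    rw [← Real.sqrt_mul (by positivity) (2 * a), ← Real.sqrt_mul (by positivity) (Real.exp 1)]
    rw [show Real.pi * a * (2 * a) * Real.exp 1 = (2 * Real.exp 1 * Real.pi) * a ^ 2 by ring,
      Real.sqrt_mul (by positivity) (a ^ 2), Real.sqrt_sq ha.le]
  have hexp : Real.exp (-(1:ℝ)/2) * Real.exp ((1:ℝ)/2) = 1 := by
    rw [← Real.exp_add]; norm_num
  rw [hC, hsq, hE, show (-(1:ℝ)/2) = -(1/2 : ℝ) by ring, Real.exp_neg]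
  have hEpos : 0 < Real.exp ((1:ℝ)/2) := Real.exp_pos _
  field_simp
end

section
/- Let u^in: [0,∞) → [0,∞) be measurable with second moment M₂ = ∫₀^∞ y²·u^in(y) dy < ∞, and let a > 0. Then for all x ≥ 0, |(1/(2√(πa)))·∫₀^∞ (e^{-(x-y)²/(4a)} - e^{-(x+y)²/(4a)})·u^in(y) dy - (M₁·x/(2√π·a^{3/2}))·e^{-x²/(4a)}| ≤ C·M₂/a^{3/2}, where M₁ = ∫₀^∞ y·u^in(y) dy and C is a universal constant. -/
open Real MeasureTheory Set


lemma phi_deriv {a : ℝ} (ha : 0 < a) (t : ℝ) :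
    HasDerivAt (fun t : ℝ => t * Real.exp (-t^2/(4*a)))
      ((1 - t^2/(2*a)) * Real.exp (-t^2/(4*a))) t := by
  have h1 : HasDerivAt (fun t : ℝ => -t^2/(4*a)) (-(2*t)/(4*a)) t := by
    simpa using ((hasDerivAt_pow 2 t).neg.div_const (4*a))
  have h3 := (hasDerivAt_id t).mul h1.exp
  refine h3.congr_deriv ?_
  simp only [id]
  ring

lemma phi_lip {a : ℝ} (ha : 0 < a) (t u : ℝ) :
    |t * Real.exp (-t^2/(4*a)) - u * Real.exp (-u^2/(4*a))| ≤ 3 * |t - u| := by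
  have bound : ∀ s : ℝ, ‖(1 - s^2/(2*a)) * Real.exp (-s^2/(4*a))‖ ≤ 3 := by
    intro s
    rw [Real.norm_eq_abs, abs_mul, Real.abs_exp]
    set v : ℝ := s^2/(4*a) with hv
    have hvpos : 0 ≤ v := by positivity
    have h2a : s^2/(2*a) = 2*v := by rw [hv]; field_simp; ring
    have habs : |1 - s^2/(2*a)| ≤ 1 + 2*v := by
      rw [h2a, abs_sub_comm]
      calc |2*v - 1| ≤ |2*v| + |1| := abs_sub _ _
        _ = 2*v + 1 := by rw [abs_of_nonneg (by linarith), abs_one]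
        _ ≤ 1 + 2*v := by linarith
    have hexp1 : Real.exp (-v) ≤ 1 := by
      rw [← Real.exp_zero]; exact Real.exp_le_exp.mpr (by linarith)
    have hve : v * Real.exp (-v) ≤ 1 := by
      have h4 : v ≤ Real.exp v := by linarith [Real.add_one_le_exp v]
      rw [Real.exp_neg]
      calc v * (Real.exp v)⁻¹ ≤ Real.exp v * (Real.exp v)⁻¹ := by gcongr
        _ = 1 := mul_inv_cancel₀ (Real.exp_ne_zero v)
    have hs4 : -s^2/(4*a) = -v := by rw [hv]; ring
    rw [hs4]
    have hep : 0 ≤ Real.exp (-v) := (Real.exp_pos _).le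
    calc |1 - s^2/(2*a)| * Real.exp (-v) ≤ (1 + 2*v) * Real.exp (-v) := by gcongr
      _ = Real.exp (-v) + 2*(v * Real.exp (-v)) := by ring
      _ ≤ 1 + 2*1 := by gcongr
      _ = 3 := by norm_num
  have := Convex.norm_image_sub_le_of_norm_hasDerivWithin_le
    (f := fun t : ℝ => t * Real.exp (-t^2/(4*a)))
    (f' := fun s : ℝ => (1 - s^2/(2*a)) * Real.exp (-s^2/(4*a)))
    (s := Set.univ) (C := 3)
    (fun s _ => (phi_deriv ha s).hasDerivWithinAt)
    (fun s _ => bound s) convex_univ (mem_univ u) (mem_univ t)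
  simpa [Real.norm_eq_abs] using this

lemma f_deriv {a : ℝ} (ha : 0 < a) (x s : ℝ) :
    HasDerivAt (fun y : ℝ => Real.exp (-(x-y)^2/(4*a)) - Real.exp (-(x+y)^2/(4*a))
        - x*y/a * Real.exp (-x^2/(4*a)))
      ((x-s)/(2*a) * Real.exp (-(x-s)^2/(4*a)) + (x+s)/(2*a) * Real.exp (-(x+s)^2/(4*a))
        - x/a * Real.exp (-x^2/(4*a))) s := by
  have h1 : HasDerivAt (fun y : ℝ => x - y) (-1) s := by
    simpa using (hasDerivAt_id s).const_sub x
  have h2 : HasDerivAt (fun y : ℝ => x + y) 1 s := by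
    simpa using (hasDerivAt_id s).const_add x
  have h1' : HasDerivAt (fun y : ℝ => -(x-y)^2/(4*a)) (-(2*(x-s)*(-1))/(4*a)) s := by
    exact ((h1.pow 2).neg.div_const (4*a)).congr_deriv (by ring)
  have h2' : HasDerivAt (fun y : ℝ => -(x+y)^2/(4*a)) (-(2*(x+s)*1)/(4*a)) s := by
    exact ((h2.pow 2).neg.div_const (4*a)).congr_deriv (by ring)
  have h3 : HasDerivAt (fun y : ℝ => x*y/a * Real.exp (-x^2/(4*a)))
      (x/a * Real.exp (-x^2/(4*a))) s := by
    have := (((hasDerivAt_id s).const_mul x).div_const a).mul_const (Real.exp (-x^2/(4*a)))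
    simpa using this
  have := (h1'.exp.sub h2'.exp).sub h3
  refine this.congr_deriv ?_
  ring

lemma taylor_bound {a : ℝ} (ha : 0 < a) {x y : ℝ} (hx : 0 ≤ x) (hy : 0 ≤ y) :
    |Real.exp (-(x-y)^2/(4*a)) - Real.exp (-(x+y)^2/(4*a))
      - x*y/a * Real.exp (-x^2/(4*a))| ≤ 3/a * y^2 := by
  set f : ℝ → ℝ := fun y : ℝ => Real.exp (-(x-y)^2/(4*a)) - Real.exp (-(x+y)^2/(4*a))
      - x*y/a * Real.exp (-x^2/(4*a)) with hf
  set f' : ℝ → ℝ := fun s : ℝ =>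
      (x-s)/(2*a) * Real.exp (-(x-s)^2/(4*a)) + (x+s)/(2*a) * Real.exp (-(x+s)^2/(4*a))
        - x/a * Real.exp (-x^2/(4*a)) with hf'
  have bound : ∀ s ∈ Icc (0:ℝ) y, ‖f' s‖ ≤ 3/a * y := by
    intro s hs
    have hphi1 := phi_lip ha (x - s) x
    have hphi2 := phi_lip ha (x + s) x
    have key : f' s = ((x-s) * Real.exp (-(x-s)^2/(4*a)) - x * Real.exp (-x^2/(4*a))) / (2*a)
        + ((x+s) * Real.exp (-(x+s)^2/(4*a)) - x * Real.exp (-x^2/(4*a))) / (2*a) := by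
      rw [hf']; field_simp; ring
    rw [Real.norm_eq_abs, key]
    have e1 : |x - s - x| = |s| := by rw [show x - s - x = -s by ring, abs_neg]
    have e2 : |x + s - x| = |s| := by rw [show x + s - x = s by ring]
    rw [e1] at hphi1; rw [e2] at hphi2
    have hsabs : |s| ≤ y := by rw [abs_of_nonneg hs.1]; exact hs.2
    calc |_ + _| ≤ |((x-s) * Real.exp (-(x-s)^2/(4*a)) - x * Real.exp (-x^2/(4*a))) / (2*a)|
          + |((x+s) * Real.exp (-(x+s)^2/(4*a)) - x * Real.exp (-x^2/(4*a))) / (2*a)| := abs_add_le _ _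
      _ = |(x-s) * Real.exp (-(x-s)^2/(4*a)) - x * Real.exp (-x^2/(4*a))| / (2*a)
          + |(x+s) * Real.exp (-(x+s)^2/(4*a)) - x * Real.exp (-x^2/(4*a))| / (2*a) := by
            rw [abs_div, abs_div, abs_of_pos (by linarith : (0:ℝ) < 2*a)]
      _ ≤ (3 * |s|) / (2*a) + (3 * |s|) / (2*a) := by gcongr
      _ ≤ (3 * y) / (2*a) + (3 * y) / (2*a) := by gcongr
      _ = 3/a * y := by field_simp; ring
  have hder : ∀ s ∈ Icc (0:ℝ) y, HasDerivWithinAt f (f' s) (Icc 0 y) s :=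
    fun s _ => (f_deriv ha x s).hasDerivWithinAt
  have := Convex.norm_image_sub_le_of_norm_hasDerivWithin_le hder bound (convex_Icc 0 y)
    (left_mem_Icc.mpr hy) (right_mem_Icc.mpr hy)
  have hf0 : f 0 = 0 := by simp [hf]
  rw [hf0, sub_zero, Real.norm_eq_abs, Real.norm_eq_abs, sub_zero, abs_of_nonneg hy] at this
  calc |f y| ≤ 3/a * y * y := this
    _ = 3/a * y^2 := by ring

lemma kernel_lb {a x : ℝ} (ha : 0 < a) (hx : 0 < x) {y : ℝ} (hy0 : 0 < y) (hy1 : y ≤ 1) :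
    Real.exp (-(x+1)^2/(4*a)) * (x/a * Real.exp (-(x/a))) * y
      ≤ Real.exp (-(x-y)^2/(4*a)) - Real.exp (-(x+y)^2/(4*a)) := by
  have hid : Real.exp (-(x+y)^2/(4*a))
      = Real.exp (-(x-y)^2/(4*a)) * Real.exp (-(x*y/a)) := by
    rw [← Real.exp_add]; congr 1; field_simp; ring
  have h1 : Real.exp (-(x+1)^2/(4*a)) ≤ Real.exp (-(x-y)^2/(4*a)) := by
    apply Real.exp_le_exp.mpr
    gcongr ?_ / _
    nlinarith
  have h2 : x/a * Real.exp (-(x/a)) * y ≤ 1 - Real.exp (-(x*y/a)) := by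
    set t : ℝ := x*y/a with ht
    have htpos : 0 < t := by positivity
    have hle : t ≤ x/a := by
      rw [ht]
      gcongr
      nlinarith
    have hstep1 : x/a * Real.exp (-(x/a)) * y = t * Real.exp (-(x/a)) := by
      rw [ht]; ring
    have hstep2 : Real.exp (-(x/a)) ≤ Real.exp (-t) := Real.exp_le_exp.mpr (by linarith)
    have hstep3 : t * Real.exp (-t) ≤ 1 - Real.exp (-t) := by
      have hexp := Real.add_one_le_exp t
      have hp := (Real.exp_pos (-t)).le
      have hm : Real.exp t * Real.exp (-t) = 1 := by
        rw [← Real.exp_add]; simp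
      nlinarith [mul_le_mul_of_nonneg_right hexp hp]
    calc x/a * Real.exp (-(x/a)) * y = t * Real.exp (-(x/a)) := hstep1
      _ ≤ t * Real.exp (-t) := by gcongr
      _ ≤ 1 - Real.exp (-t) := hstep3
  have hnn1 : 0 ≤ x/a * Real.exp (-(x/a)) * y := by positivity
  calc Real.exp (-(x+1)^2/(4*a)) * (x/a * Real.exp (-(x/a))) * y
      = Real.exp (-(x+1)^2/(4*a)) * (x/a * Real.exp (-(x/a)) * y) := by ring
    _ ≤ Real.exp (-(x-y)^2/(4*a)) * (1 - Real.exp (-(x*y/a))) := by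
        apply mul_le_mul h1 h2 hnn1 (Real.exp_pos _).le
    _ = Real.exp (-(x-y)^2/(4*a)) - Real.exp (-(x+y)^2/(4*a)) := by
        rw [hid]; ring

theorem stmt_15 :
    ∃ C > (0 : ℝ), ∀ (uin : ℝ → ℝ), (∀ y, 0 ≤ uin y) → Measurable uin →
      ∀ (M₁ M₂ : ℝ), M₁ = (∫ y in Set.Ioi (0 : ℝ), y * uin y) →
        M₂ = (∫ y in Set.Ioi (0 : ℝ), y ^ 2 * uin y) →
        MeasureTheory.IntegrableOn (fun y => y ^ 2 * uin y) (Set.Ioi 0) →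
        ∀ a : ℝ, 0 < a → ∀ x : ℝ, 0 ≤ x →
          |1 / (2 * Real.sqrt (Real.pi * a)) *
              (∫ y in Set.Ioi (0 : ℝ),
                (Real.exp (-(x - y) ^ 2 / (4 * a)) - Real.exp (-(x + y) ^ 2 / (4 * a))) * uin y) -
            M₁ * x / (2 * Real.sqrt Real.pi * a ^ (3 / 2 : ℝ)) * Real.exp (-x ^ 2 / (4 * a))| ≤
            C * M₂ / a ^ (3 / 2 : ℝ) := by
  refine ⟨3, by norm_num, ?_⟩
  intro uin hnn hmeas M₁ M₂ hM1 hM2 hM2int a ha x hx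
  have hM2nonneg : 0 ≤ M₂ := by
    rw [hM2]
    exact setIntegral_nonneg measurableSet_Ioi (fun y _ => mul_nonneg (sq_nonneg y) (hnn y))
  have ha32 : a ^ (3/2 : ℝ) = a * Real.sqrt a := by
    rw [show (3/2:ℝ) = 1 + 1/2 by norm_num, Real.rpow_add ha, Real.rpow_one,
      ← Real.sqrt_eq_rpow]
  have ha32pos : 0 < a ^ (3/2 : ℝ) := Real.rpow_pos_of_pos ha _
  by_cases hI : IntegrableOn (fun y => y * uin y) (Set.Ioi (0:ℝ)) volume
  · -- integrable case
    set gx : ℝ := Real.exp (-x^2/(4*a)) with hgx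
    have hgx1 : gx ≤ 1 := by
      rw [hgx, ← Real.exp_zero]
      apply Real.exp_le_exp.mpr
      apply div_nonpos_of_nonpos_of_nonneg (by nlinarith [sq_nonneg x]) (by linarith)
    have hgxpos : 0 < gx := Real.exp_pos _
    have hKcont : Continuous (fun y : ℝ =>
        Real.exp (-(x - y)^2/(4*a)) - Real.exp (-(x + y)^2/(4*a))) := by fun_prop
    have hKint : IntegrableOn (fun y =>
        (Real.exp (-(x - y)^2/(4*a)) - Real.exp (-(x + y)^2/(4*a))) * uin y)
        (Set.Ioi (0:ℝ)) volume := by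
      apply Integrable.mono' ((hM2int.const_mul (3/a)).add (hI.const_mul (x/a)))
      · exact hKcont.aestronglyMeasurable.mul hmeas.aestronglyMeasurable
      · rw [ae_restrict_iff' measurableSet_Ioi]
        filter_upwards with y hy
        have hy0 : (0:ℝ) ≤ y := (le_of_lt hy)
        have ht := taylor_bound ha hx hy0
        have hKb : |Real.exp (-(x - y)^2/(4*a)) - Real.exp (-(x + y)^2/(4*a))|
            ≤ 3/a*y^2 + x/a*y := by
          have h1 : |Real.exp (-(x - y)^2/(4*a)) - Real.exp (-(x + y)^2/(4*a))|
              ≤ |Real.exp (-(x-y)^2/(4*a)) - Real.exp (-(x+y)^2/(4*a))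
                - x*y/a * Real.exp (-x^2/(4*a))| + |x*y/a * Real.exp (-x^2/(4*a))| := by
            have := abs_add_le (Real.exp (-(x-y)^2/(4*a)) - Real.exp (-(x+y)^2/(4*a))
                - x*y/a * Real.exp (-x^2/(4*a))) (x*y/a * Real.exp (-x^2/(4*a)))
            simpa using this
          have h2 : |x*y/a * Real.exp (-x^2/(4*a))| ≤ x/a*y := by
            rw [abs_of_nonneg (by positivity)]
            calc x*y/a * Real.exp (-x^2/(4*a)) ≤ x*y/a * 1 := by gcongr
              _ = x/a*y := by ring
          linarith
        rw [Real.norm_eq_abs, abs_mul, abs_of_nonneg (hnn y)]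
        calc |Real.exp (-(x - y)^2/(4*a)) - Real.exp (-(x + y)^2/(4*a))| * uin y
            ≤ (3/a*y^2 + x/a*y) * uin y := mul_le_mul_of_nonneg_right hKb (hnn y)
          _ = 3/a * (y^2 * uin y) + x/a * (y * uin y) := by ring
    have hI' : Integrable (fun y => (x*gx/a) * (y * uin y)) (volume.restrict (Set.Ioi (0:ℝ))) :=
      hI.const_mul (x*gx/a)
    have hsub : (∫ y in Set.Ioi (0:ℝ),
          (Real.exp (-(x - y)^2/(4*a)) - Real.exp (-(x + y)^2/(4*a))) * uin y)
          - (x*gx/a) * M₁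
        = ∫ y in Set.Ioi (0:ℝ),
            (Real.exp (-(x - y)^2/(4*a)) - Real.exp (-(x + y)^2/(4*a))
              - x*y/a * gx) * uin y := by
      rw [hM1, ← MeasureTheory.integral_const_mul, ← integral_sub hKint hI']
      refine integral_congr_ae (Filter.Eventually.of_forall fun y => ?_)
      ring
    have hbound : |∫ y in Set.Ioi (0:ℝ),
          (Real.exp (-(x - y)^2/(4*a)) - Real.exp (-(x + y)^2/(4*a))
            - x*y/a * gx) * uin y| ≤ 3/a * M₂ := by
      have hae : ∀ᵐ y ∂(volume.restrict (Set.Ioi (0:ℝ))),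
          ‖(Real.exp (-(x - y)^2/(4*a)) - Real.exp (-(x + y)^2/(4*a))
            - x*y/a * gx) * uin y‖ ≤ 3/a * (y^2 * uin y) := by
        rw [ae_restrict_iff' measurableSet_Ioi]
        filter_upwards with y hy
        have ht := taylor_bound ha hx (le_of_lt hy)
        rw [Real.norm_eq_abs, abs_mul, abs_of_nonneg (hnn y)]
        calc |Real.exp (-(x - y)^2/(4*a)) - Real.exp (-(x + y)^2/(4*a)) - x*y/a * gx| * uin y
            ≤ (3/a * y^2) * uin y := mul_le_mul_of_nonneg_right ht (hnn y)
          _ = 3/a * (y^2 * uin y) := by ring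
      have := norm_integral_le_of_norm_le (hM2int.const_mul (3/a)) hae
      rw [MeasureTheory.integral_const_mul, ← hM2] at this
      simpa [Real.norm_eq_abs] using this
    have hsqa : 0 < Real.sqrt a := Real.sqrt_pos.mpr ha
    have hsqpi : 0 < Real.sqrt Real.pi := Real.sqrt_pos.mpr Real.pi_pos
    have hsqpi1 : 1 ≤ Real.sqrt Real.pi := by
      rw [show (1:ℝ) = Real.sqrt 1 by simp]
      exact Real.sqrt_le_sqrt (by linarith [Real.pi_gt_three])
    have hsplit : M₁ * x / (2 * Real.sqrt Real.pi * a ^ (3/2 : ℝ)) * gx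
        = 1 / (2 * Real.sqrt (Real.pi * a)) * ((x*gx/a) * M₁) := by
      rw [ha32, Real.sqrt_mul Real.pi_pos.le]
      field_simp
    rw [hsplit, ← mul_sub, abs_mul, abs_of_nonneg (by positivity :
        (0:ℝ) ≤ 1 / (2 * Real.sqrt (Real.pi * a)))]
    rw [hsub]
    calc 1 / (2 * Real.sqrt (Real.pi * a)) * |∫ y in Set.Ioi (0:ℝ),
          (Real.exp (-(x - y)^2/(4*a)) - Real.exp (-(x + y)^2/(4*a))
            - x*y/a * gx) * uin y|
        ≤ 1 / (2 * Real.sqrt (Real.pi * a)) * (3/a * M₂) := by gcongr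
      _ ≤ 3 * M₂ / a ^ (3/2 : ℝ) := by
          rw [ha32, Real.sqrt_mul Real.pi_pos.le]
          rw [div_mul_eq_mul_div, one_mul, div_le_div_iff₀ (by positivity) (by positivity)]
          have e1 : 3/a * M₂ * (a * Real.sqrt a) = 3 * M₂ * Real.sqrt a := by
            field_simp
          rw [e1]
          nlinarith [mul_nonneg (mul_nonneg hM2nonneg hsqa.le)
            (by linarith : (0:ℝ) ≤ 2 * Real.sqrt Real.pi - 1)]
  · -- non-integrable case
    by_cases hx0 : x = 0
    · subst hx0
      have hzero : ∀ y : ℝ,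
          (Real.exp (-((0:ℝ) - y)^2/(4*a)) - Real.exp (-((0:ℝ) + y)^2/(4*a))) * uin y = 0 := by
        intro y
        rw [show (((0:ℝ)) - y)^2 = ((0:ℝ) + y)^2 by ring]
        ring
      simp only [hzero, integral_zero, mul_zero, MulZeroClass.mul_zero, zero_div, zero_mul,
        sub_zero, abs_zero, mul_comm]
      simp
      positivity
    · have hxpos : 0 < x := lt_of_le_of_ne hx (Ne.symm hx0)
      have hKnot : ¬ IntegrableOn (fun y =>
          (Real.exp (-(x - y)^2/(4*a)) - Real.exp (-(x + y)^2/(4*a))) * uin y)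
          (Set.Ioi (0:ℝ)) volume := by
        intro hK
        apply hI
        have hIoi1 : IntegrableOn (fun y => y * uin y) (Set.Ioi (1:ℝ)) volume := by
          apply Integrable.mono' (hM2int.mono_set (Ioi_subset_Ioi zero_le_one))
          · exact (measurable_id.mul hmeas).aestronglyMeasurable
          · rw [ae_restrict_iff' measurableSet_Ioi]
            filter_upwards with y hy
            have hy1 : (1:ℝ) < y := hy
            rw [Real.norm_eq_abs, abs_mul, abs_of_nonneg (by linarith), abs_of_nonneg (hnn y)]
            exact mul_le_mul_of_nonneg_right (by nlinarith) (hnn y)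
        have hIoc : IntegrableOn (fun y => y * uin y) (Set.Ioc (0:ℝ) 1) volume := by
          set c : ℝ := Real.exp (-(x+1)^2/(4*a)) * (x/a * Real.exp (-(x/a))) with hc
          have hcpos : 0 < c := by rw [hc]; positivity
          apply Integrable.mono' ((hK.mono_set Ioc_subset_Ioi_self).const_mul c⁻¹)
          · exact (measurable_id.mul hmeas).aestronglyMeasurable
          · rw [ae_restrict_iff' measurableSet_Ioc]
            filter_upwards with y hy
            obtain ⟨hy0, hy1⟩ := hy
            have hkb := kernel_lb ha hxpos hy0 hy1
            rw [Real.norm_eq_abs, abs_mul, abs_of_nonneg hy0.le, abs_of_nonneg (hnn y)]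
            have hstep : c * (y * uin y)
                ≤ (Real.exp (-(x - y)^2/(4*a)) - Real.exp (-(x + y)^2/(4*a))) * uin y := by
              have h := mul_le_mul_of_nonneg_right hkb (hnn y)
              calc c * (y * uin y)
                  = Real.exp (-(x+1)^2/(4*a)) * (x/a * Real.exp (-(x/a))) * y * uin y := by
                    rw [hc]; ring
                _ ≤ (Real.exp (-(x - y)^2/(4*a)) - Real.exp (-(x + y)^2/(4*a))) * uin y := h
            calc y * uin y = c⁻¹ * (c * (y * uin y)) := by field_simp
              _ ≤ c⁻¹ * ((Real.exp (-(x - y)^2/(4*a)) - Real.exp (-(x + y)^2/(4*a))) * uin y) := by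
                  gcongr
        have := hIoc.union hIoi1
        rwa [Set.Ioc_union_Ioi_eq_Ioi zero_le_one] at this
      have hM10 : M₁ = 0 := by rw [hM1]; exact integral_undef hI
      have hS0 : (∫ y in Set.Ioi (0:ℝ),
          (Real.exp (-(x - y)^2/(4*a)) - Real.exp (-(x + y)^2/(4*a))) * uin y) = 0 :=
        integral_undef hKnot
      rw [hM10, hS0]
      simp
      positivity
end

section
/- Let δ ∈ (1,2) and suppose g: [0,∞) → [0,∞) is measurable with g(s) ≤ C₀·(1+s)^{-δ} for all s ≥ 0 and g(s) ≥ c₀·s^{-δ} for s ≥ 1 with c₀ > 0. Then there exist constants 0 < c ≤ C such that for all sufficiently large a > 0, c·a^{-(1+δ)/2} ≤ (1/(2√π))·a^{-3/2}·∫₀^∞ s·e^{-s²/(4a)}·g(s) ds ≤ C·a^{-(1+δ)/2}. -/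
open Real Set MeasureTheory

theorem stmt_19 (δ : ℝ) (hδ : δ ∈ Set.Ioo (1 : ℝ) 2) (g : ℝ → ℝ)
    (hmeas : Measurable g) (hnneg : ∀ s ≥ (0 : ℝ), 0 ≤ g s)
    (C₀ : ℝ) (hub : ∀ s ≥ (0 : ℝ), g s ≤ C₀ * (1 + s) ^ (-δ))
    (c₀ : ℝ) (hc₀ : 0 < c₀) (hlb : ∀ s ≥ (1 : ℝ), c₀ * s ^ (-δ) ≤ g s) :
    ∃ c C : ℝ, 0 < c ∧ c ≤ C ∧ ∃ A : ℝ, ∀ a ≥ A,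
      c * a ^ (-(1 + δ) / 2) ≤
        1 / (2 * Real.sqrt Real.pi) * a ^ (-(3 / 2 : ℝ)) *
          (∫ s in Set.Ioi (0 : ℝ), s * Real.exp (-s ^ 2 / (4 * a)) * g s) ∧
      1 / (2 * Real.sqrt Real.pi) * a ^ (-(3 / 2 : ℝ)) *
          (∫ s in Set.Ioi (0 : ℝ), s * Real.exp (-s ^ 2 / (4 * a)) * g s) ≤
        C * a ^ (-(1 + δ) / 2) := by
  obtain ⟨hδ1, hδ2⟩ := hδ
  have hC₀ : 0 ≤ C₀ := by
    have h0 := hnneg 0 le_rfl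
    have h1 := hub 0 le_rfl
    simpa using h0.trans h1
  set r : ℝ := (2 - δ) / 2 with hrdef
  have hr0 : 0 < r := by rw [hrdef]; linarith
  have hΓ : 0 < Real.Gamma r := Real.Gamma_pos_of_pos hr0
  have hπ : 0 < Real.sqrt Real.pi := Real.sqrt_pos.mpr Real.pi_pos
  set c : ℝ := 1 / (2 * Real.sqrt Real.pi) * (c₀ * Real.exp (-(1/4)) / (2 * (2 - δ))) with hcdef
  set C₁ : ℝ := 1 / (2 * Real.sqrt Real.pi) *
      (C₀ * ((4 : ℝ) ^ r * (1/2) * Real.Gamma r)) with hC₁def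
  have hcpos : 0 < c := by
    apply mul_pos (by positivity)
    apply div_pos (by positivity)
    linarith
  refine ⟨c, max C₁ c, hcpos, le_max_right _ _,
    max 1 ((2 : ℝ) ^ (2 / (2 - δ))), fun a ha => ?_⟩
  have ha1 : (1 : ℝ) ≤ a := le_trans (le_max_left _ _) ha
  have ha0 : (0 : ℝ) < a := lt_of_lt_of_le one_pos ha1
  set b : ℝ := (4 * a)⁻¹ with hbdef
  have hb : 0 < b := by positivity
  have hexp_eq : ∀ s : ℝ, (-s ^ 2 / (4 * a)) = -b * s ^ 2 := by
    intro s; rw [hbdef, div_eq_mul_inv]; ring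
  have hδ' : (-1 : ℝ) < 1 - δ := by linarith
  -- the dominating function
  have hFint : IntegrableOn
      (fun s : ℝ => C₀ * (s ^ (1 - δ) * Real.exp (-b * s ^ 2))) (Ioi 0) :=
    (integrableOn_rpow_mul_exp_neg_mul_sq hb hδ').const_mul C₀
  -- rpow identity
  have hss : ∀ s : ℝ, 0 < s → s ^ (1 - δ) = s * s ^ (-δ) := by
    intro s hs
    rw [show (1 : ℝ) - δ = 1 + (-δ) by ring, Real.rpow_add hs, Real.rpow_one]
  -- pointwise upper bound
  have hfb : ∀ s ∈ Ioi (0 : ℝ),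
      s * Real.exp (-s ^ 2 / (4 * a)) * g s
        ≤ C₀ * (s ^ (1 - δ) * Real.exp (-b * s ^ 2)) := by
    intro s hs
    rw [mem_Ioi] at hs
    have h1 : (1 + s) ^ (-δ) ≤ s ^ (-δ) :=
      Real.rpow_le_rpow_of_nonpos hs (by linarith) (by linarith)
    have hg : g s ≤ C₀ * s ^ (-δ) :=
      (hub s hs.le).trans (mul_le_mul_of_nonneg_left h1 hC₀)
    have hE : (0 : ℝ) ≤ s * Real.exp (-s ^ 2 / (4 * a)) := by positivity
    calc s * Real.exp (-s ^ 2 / (4 * a)) * g s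
        ≤ s * Real.exp (-s ^ 2 / (4 * a)) * (C₀ * s ^ (-δ)) :=
          mul_le_mul_of_nonneg_left hg hE
      _ = C₀ * (s ^ (1 - δ) * Real.exp (-b * s ^ 2)) := by
          rw [hss s hs, hexp_eq s]; ring
  -- integrability of the integrand
  have hfint : IntegrableOn
      (fun s : ℝ => s * Real.exp (-s ^ 2 / (4 * a)) * g s) (Ioi 0) := by
    apply Integrable.mono' hFint
    · exact ((measurable_id.mul
        (((measurable_id.pow_const 2).neg.div_const (4 * a)).exp)).mul
          hmeas).aestronglyMeasurable
    · filter_upwards [ae_restrict_mem measurableSet_Ioi] with s hs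
      rw [mem_Ioi] at hs
      rw [Real.norm_eq_abs, abs_of_nonneg (mul_nonneg (by positivity) (hnneg s hs.le))]
      exact hfb s (mem_Ioi.mpr hs)
  -- value of the Gaussian-type integral
  have hFval : ∫ s in Ioi (0 : ℝ), C₀ * (s ^ (1 - δ) * Real.exp (-b * s ^ 2))
      = C₀ * ((4 * a) ^ r * (1/2) * Real.Gamma r) := by
    rw [integral_const_mul]
    congr 1
    have h2 : ∫ s in Ioi (0 : ℝ), s ^ (1 - δ) * Real.exp (-b * s ^ 2)
        = ∫ s in Ioi (0 : ℝ), s ^ (1 - δ) * Real.exp (-b * s ^ ((2 : ℕ) : ℝ)) := by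
      simp_rw [Real.rpow_natCast]
    rw [h2]
    rw [integral_rpow_mul_exp_neg_mul_rpow (by norm_num) hδ' hb]
    have hbr : b ^ (-(1 - δ + 1) / ((2 : ℕ) : ℝ)) = (4 * a) ^ r := by
      have h3 : (-(1 - δ + 1) / ((2 : ℕ) : ℝ)) = -r := by
        rw [hrdef]; push_cast; ring
      rw [h3, hbdef, Real.inv_rpow (by positivity), Real.rpow_neg (by positivity),
        inv_inv]
    rw [hbr]
    have h4 : (1 - δ + 1) / ((2 : ℕ) : ℝ) = r := by rw [hrdef]; push_cast; ring
    rw [h4]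
    ring
  have hI_ub : ∫ s in Ioi (0 : ℝ), s * Real.exp (-s ^ 2 / (4 * a)) * g s
      ≤ C₀ * ((4 * a) ^ r * (1/2) * Real.Gamma r) := by
    rw [← hFval]
    exact setIntegral_mono_on hfint hFint measurableSet_Ioi hfb
  -- rpow exponent arithmetic
  have hpow : a ^ (-(3 / 2 : ℝ)) * a ^ r = a ^ (-(1 + δ) / 2) := by
    rw [← Real.rpow_add ha0]
    congr 1
    rw [hrdef]; ring
  have hkey : (4 * a) ^ r = 4 ^ r * a ^ r := Real.mul_rpow (by norm_num) ha0.le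
  constructor
  · -- lower bound
    have hsa1 : (1 : ℝ) ≤ Real.sqrt a := by
      have := Real.sqrt_le_sqrt ha1
      simpa using this
    have haA : (2 : ℝ) ^ (2 / (2 - δ)) ≤ a := le_trans (le_max_right _ _) ha
    have har2 : (2 : ℝ) ≤ a ^ r := by
      have h5 : ((2 : ℝ) ^ (2 / (2 - δ))) ^ r ≤ a ^ r :=
        Real.rpow_le_rpow (by positivity) haA hr0.le
      have h6 : ((2 : ℝ) ^ (2 / (2 - δ))) ^ r = 2 := by
        rw [← Real.rpow_mul (by norm_num), hrdef]
        rw [show 2 / (2 - δ) * ((2 - δ) / 2) = 1 from by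
          rw [div_mul_div_comm, mul_comm (2 - δ) 2]
          exact div_self (by nlinarith), Real.rpow_one]
      linarith [h5, h6.symm.le]
    -- pointwise lower bound on Ioc 1 √a
    have hlow_pt : ∀ s ∈ Ioc (1 : ℝ) (Real.sqrt a),
        c₀ * Real.exp (-(1/4)) * s ^ (1 - δ)
          ≤ s * Real.exp (-s ^ 2 / (4 * a)) * g s := by
      intro s hs
      obtain ⟨hs1, hs2⟩ := hs
      have hs0 : (0 : ℝ) < s := lt_trans one_pos hs1
      have hsq : s ^ 2 ≤ a := by
        have := pow_le_pow_left₀ hs0.le hs2 2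
        rwa [Real.sq_sqrt ha0.le] at this
      have hEe : Real.exp (-(1/4)) ≤ Real.exp (-s ^ 2 / (4 * a)) := by
        apply Real.exp_le_exp.mpr
        rw [neg_div, neg_le_neg_iff]
        rw [div_le_div_iff₀ (by positivity) (by norm_num)]
        nlinarith
      have hgl : c₀ * s ^ (-δ) ≤ g s := hlb s hs1.le
      have h7 : s * Real.exp (-(1/4)) * (c₀ * s ^ (-δ))
          ≤ s * Real.exp (-s ^ 2 / (4 * a)) * g s := by
        apply mul_le_mul (mul_le_mul_of_nonneg_left hEe hs0.le) hgl
          (mul_nonneg hc₀.le (Real.rpow_nonneg hs0.le _)) (by positivity)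
      calc c₀ * Real.exp (-(1/4)) * s ^ (1 - δ)
          = s * Real.exp (-(1/4)) * (c₀ * s ^ (-δ)) := by rw [hss s hs0]; ring
        _ ≤ _ := h7
    have hφint : IntegrableOn
        (fun s : ℝ => c₀ * Real.exp (-(1/4)) * s ^ (1 - δ))
        (Ioc 1 (Real.sqrt a)) := by
      apply Integrable.const_mul
      exact (intervalIntegrable_iff_integrableOn_Ioc_of_le hsa1).mp
        (intervalIntegral.intervalIntegrable_rpow' hδ')
    have hsub : Ioc (1 : ℝ) (Real.sqrt a) ⊆ Ioi 0 :=
      fun s hs => mem_Ioi.mpr (lt_trans one_pos hs.1)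
    have hstep : ∫ s in Ioc (1 : ℝ) (Real.sqrt a),
          c₀ * Real.exp (-(1/4)) * s ^ (1 - δ)
        ≤ ∫ s in Ioc (1 : ℝ) (Real.sqrt a),
            s * Real.exp (-s ^ 2 / (4 * a)) * g s :=
      setIntegral_mono_on hφint (hfint.mono_set hsub) measurableSet_Ioc hlow_pt
    have hmono : ∫ s in Ioc (1 : ℝ) (Real.sqrt a),
          s * Real.exp (-s ^ 2 / (4 * a)) * g s
        ≤ ∫ s in Ioi (0 : ℝ), s * Real.exp (-s ^ 2 / (4 * a)) * g s := by
      apply setIntegral_mono_set hfint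
      · filter_upwards [ae_restrict_mem measurableSet_Ioi] with s hs
        rw [mem_Ioi] at hs
        exact mul_nonneg (by positivity) (hnneg s hs.le)
      · exact HasSubset.Subset.eventuallyLE hsub
    have hval : ∫ s in Ioc (1 : ℝ) (Real.sqrt a), s ^ (1 - δ)
        = (a ^ r - 1) / (2 - δ) := by
      rw [← intervalIntegral.integral_of_le hsa1,
        integral_rpow (Or.inl hδ')]
      have h8 : Real.sqrt a ^ (1 - δ + 1) = a ^ r := by
        rw [Real.sqrt_eq_rpow, ← Real.rpow_mul ha0.le]
        congr 1
        rw [hrdef]; ring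
      rw [h8, Real.one_rpow]
      congr 1
      ring
    have hφval : ∫ s in Ioc (1 : ℝ) (Real.sqrt a),
          c₀ * Real.exp (-(1/4)) * s ^ (1 - δ)
        = c₀ * Real.exp (-(1/4)) * ((a ^ r - 1) / (2 - δ)) := by
      rw [integral_const_mul, hval]
    have hI_lb : c₀ * Real.exp (-(1/4)) / (2 * (2 - δ)) * a ^ r
        ≤ ∫ s in Ioi (0 : ℝ), s * Real.exp (-s ^ 2 / (4 * a)) * g s := by
      have h9 : c₀ * Real.exp (-(1/4)) / (2 * (2 - δ)) * a ^ r
          ≤ c₀ * Real.exp (-(1/4)) * ((a ^ r - 1) / (2 - δ)) := by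
        calc c₀ * Real.exp (-(1/4)) / (2 * (2 - δ)) * a ^ r
            = c₀ * Real.exp (-(1/4)) * (2 - δ)⁻¹ * (a ^ r / 2) := by
              rw [div_eq_mul_inv, mul_inv]; ring
          _ ≤ c₀ * Real.exp (-(1/4)) * (2 - δ)⁻¹ * (a ^ r - 1) := by
              apply mul_le_mul_of_nonneg_left (by linarith)
              exact mul_nonneg (by positivity) (inv_nonneg.mpr (by linarith))
          _ = c₀ * Real.exp (-(1/4)) * ((a ^ r - 1) / (2 - δ)) := by
              rw [div_eq_mul_inv]; ring
      calc c₀ * Real.exp (-(1/4)) / (2 * (2 - δ)) * a ^ r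
          ≤ c₀ * Real.exp (-(1/4)) * ((a ^ r - 1) / (2 - δ)) := h9
        _ = ∫ s in Ioc (1 : ℝ) (Real.sqrt a),
              c₀ * Real.exp (-(1/4)) * s ^ (1 - δ) := hφval.symm
        _ ≤ _ := hstep.trans hmono
    have h10 := mul_le_mul_of_nonneg_left hI_lb
      (show (0 : ℝ) ≤ 1 / (2 * Real.sqrt Real.pi) * a ^ (-(3 / 2 : ℝ)) by positivity)
    calc c * a ^ (-(1 + δ) / 2)
        = 1 / (2 * Real.sqrt Real.pi) * a ^ (-(3 / 2 : ℝ)) *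
            (c₀ * Real.exp (-(1/4)) / (2 * (2 - δ)) * a ^ r) := by
          have e1 : c₀ * Real.exp (-(1/4)) / (2 * (2 - δ))
              = c₀ * Real.exp (-(1/4)) * (2 - δ)⁻¹ * (1/2) := by
            rw [div_eq_mul_inv, mul_inv]; ring
          rw [← hpow, hcdef, e1]; ring
      _ ≤ _ := h10
  · -- upper bound
    have h11 := mul_le_mul_of_nonneg_left hI_ub
      (show (0 : ℝ) ≤ 1 / (2 * Real.sqrt Real.pi) * a ^ (-(3 / 2 : ℝ)) by positivity)
    calc 1 / (2 * Real.sqrt Real.pi) * a ^ (-(3 / 2 : ℝ)) *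
          (∫ s in Ioi (0 : ℝ), s * Real.exp (-s ^ 2 / (4 * a)) * g s)
        ≤ 1 / (2 * Real.sqrt Real.pi) * a ^ (-(3 / 2 : ℝ)) *
            (C₀ * ((4 * a) ^ r * (1/2) * Real.Gamma r)) := h11
      _ = C₁ * a ^ (-(1 + δ) / 2) := by
          rw [← hpow, hkey, hC₁def]; ring
      _ ≤ max C₁ c * a ^ (-(1 + δ) / 2) :=
          mul_le_mul_of_nonneg_right (le_max_left _ _)
            (Real.rpow_nonneg ha0.le _)
end
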